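/- Let B ⊂ ℤ be a finite set with N elements and 0 ∈ B, spectral with spectrum Λ ⊂ ℝ with 0 ∈ Λ, and suppose the Hadamard matrix associated to (B, Λ) is equivalent to the standard N×N Hadamard matrix. Then B = d B₀ where d is an integer and B₀ is a complete set of residues modulo N with gcd(B₀) = 1; and Λ = (1/R) f L₀ where f and R are integers, L₀ is a complete set of residues modulo N with gcd(L₀) = 1, and R = N S where S divides d f and d f / S is relatively prime to N. Conversely, for any such data, (1/R) f L₀ is a spectrum for d B₀. -/

import Mathlib

open Matrix

/-- The matrix `(1/√N)(e^{2πi b λ})_{b ∈ B, λ ∈ Λ}` associated to `(B, Λ)`. -/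
noncomputable def specMatrix (B : Finset ℤ) (Λ : Finset ℝ) : Matrix B Λ ℂ :=
  fun b l => ((1 / Real.sqrt B.card : ℝ) : ℂ) *
    Complex.exp (2 * (Real.pi : ℂ) * Complex.I * ((b : ℤ) : ℂ) * ((l : ℝ) : ℂ))

/-- `Λ` is a spectrum for the finite set `B`: the associated matrix is a (square) unitary
matrix. -/
def IsSpectrum (B : Finset ℤ) (Λ : Finset ℝ) : Prop :=
  B.card = Λ.card ∧
    specMatrix B Λ * (specMatrix B Λ)ᴴ = 1 ∧
    (specMatrix B Λ)ᴴ * specMatrix B Λ = 1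

/-- The standard `N × N` Hadamard matrix `(1/√N)(e^{2πi jk/N})`. -/
noncomputable def stdHadamard (N : ℕ) : Matrix (Fin N) (Fin N) ℂ :=
  fun j k => ((1 / Real.sqrt N : ℝ) : ℂ) *
    Complex.exp (2 * (Real.pi : ℂ) * Complex.I * (j : ℕ) * (k : ℕ) / (N : ℂ))

/-- `H` is equivalent to `H'`: after bijections of the index sets, the entries agree up to
multiplication of rows and columns by unimodular constants. -/
def EquivToStd {ι κ : Type*} [Fintype ι] [Fintype κ] (H : Matrix ι κ ℂ) {N : ℕ}
    (H' : Matrix (Fin N) (Fin N) ℂ) : Prop :=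
  ∃ (π : ι ≃ Fin N) (ρ : κ ≃ Fin N) (c : ι → ℂ) (d : κ → ℂ),
    (∀ i, ‖c i‖ = 1) ∧ (∀ j, ‖d j‖ = 1) ∧
    ∀ i j, H i j = c i * d j * H' (π i) (ρ j)

/-- `L` is a complete set of representatives modulo `R`. -/
def IsCompleteResidues (R : ℤ) (L : Finset ℤ) : Prop :=
  ∀ x : ℤ, ∃! l, l ∈ L ∧ l ≡ x [ZMOD R]


lemma icr_injOn {N : ℕ} {L : Finset ℤ} (h : IsCompleteResidues (N : ℤ) L)
    {a b : ℤ} (ha : a ∈ L) (hb : b ∈ L) (hab : a ≡ b [ZMOD (N:ℤ)]) : a = b := by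
  obtain ⟨l, -, hu⟩ := h b
  rw [hu a ⟨ha, hab⟩, hu b ⟨hb, Int.ModEq.refl b⟩]

lemma icr_card {N : ℕ} (hN : 0 < N) {L : Finset ℤ} (h : IsCompleteResidues (N : ℤ) L) :
    L.card = N := by
  haveI : NeZero N := ⟨hN.ne'⟩
  have himg : L.image (fun a : ℤ => (a : ZMod N)) = Finset.univ := by
    refine Finset.eq_univ_of_forall fun x => ?_
    obtain ⟨l, ⟨hl, hlx⟩, -⟩ := h x.val
    refine Finset.mem_image.2 ⟨l, hl, ?_⟩
    have := (ZMod.intCast_eq_intCast_iff l x.val N).2 hlx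
    simpa [ZMod.intCast_cast, ZMod.intCast_zmod_cast] using this
  have hinj : Set.InjOn (fun a : ℤ => (a : ZMod N)) L := by
    intro a ha b hb hab
    exact icr_injOn h ha hb ((ZMod.intCast_eq_intCast_iff a b N).1 hab)
  calc L.card = (L.image (fun a : ℤ => (a : ZMod N))).card := (Finset.card_image_of_injOn hinj).symm
    _ = N := by rw [himg, Finset.card_univ, ZMod.card]

lemma icr_of_card {N : ℕ} (hN : 0 < N) {L : Finset ℤ} (hcard : L.card = N)
    (hinj : ∀ a ∈ L, ∀ b ∈ L, a ≡ b [ZMOD (N:ℤ)] → a = b) : IsCompleteResidues (N : ℤ) L := by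
  haveI : NeZero N := ⟨hN.ne'⟩
  have hinj' : Set.InjOn (fun a : ℤ => (a : ZMod N)) L := fun a ha b hb hab =>
    hinj a ha b hb ((ZMod.intCast_eq_intCast_iff a b N).1 hab)
  have himg : L.image (fun a : ℤ => (a : ZMod N)) = Finset.univ := by
    apply Finset.eq_univ_of_card
    rw [Finset.card_image_of_injOn hinj', hcard, ZMod.card]
  intro x
  have hx : (x : ZMod N) ∈ L.image (fun a : ℤ => (a : ZMod N)) := by
    rw [himg]; exact Finset.mem_univ _
  obtain ⟨l, hl, hlx⟩ := Finset.mem_image.1 hx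
  refine ⟨l, ⟨hl, (ZMod.intCast_eq_intCast_iff l x N).1 hlx⟩, ?_⟩
  rintro m ⟨hm, hmx⟩
  exact hinj m hm l hl (hmx.trans ((ZMod.intCast_eq_intCast_iff l x N).1 hlx).symm)


lemma exp_residue {N : ℕ} (hN : 0 < N) {a b : ℤ} (hab : a ≡ b [ZMOD (N:ℤ)]) :
    Complex.exp (2 * Real.pi * Complex.I * ((a : ℂ) / N)) =
      Complex.exp (2 * Real.pi * Complex.I * ((b : ℂ) / N)) := by
  obtain ⟨k, hk⟩ := Int.ModEq.dvd hab
  have hb : (a : ℂ) = b - N * k := by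
    have h1 : a = b - N * k := by omega
    exact_mod_cast congrArg (fun z : ℤ => (z : ℂ)) h1
  have hNne : (N : ℂ) ≠ 0 := Nat.cast_ne_zero.2 hN.ne'
  rw [hb]
  have heq : 2 * (Real.pi:ℂ) * Complex.I * (((b:ℂ) - N * k) / N)
      = 2 * Real.pi * Complex.I * ((b:ℂ) / N) + (-k : ℤ) * (2 * Real.pi * Complex.I) := by
    push_cast
    field_simp
    ring
  rw [heq, Complex.exp_add, Complex.exp_int_mul_two_pi_mul_I, mul_one]

lemma sum_exp_residues (N : ℕ) (hN : 0 < N) {L : Finset ℤ}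
    (hL : IsCompleteResidues (N : ℤ) L) (c : ℤ) :
    ∑ m ∈ L, Complex.exp (2 * Real.pi * Complex.I * (((c * m : ℤ) : ℂ) / N)) =
      if (N : ℤ) ∣ c then (N : ℂ) else 0 := by
  have hNne : (N : ℂ) ≠ 0 := Nat.cast_ne_zero.2 hN.ne'
  have hNZ : (N : ℤ) ≠ 0 := by exact_mod_cast hN.ne'
  have hstep : ∑ m ∈ L, Complex.exp (2 * Real.pi * Complex.I * (((c * m : ℤ) : ℂ) / N)) =
      ∑ n ∈ Finset.range N, Complex.exp (2 * Real.pi * Complex.I * (((c * n : ℤ) : ℂ) / N)) := by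
    refine Finset.sum_nbij' (fun m => (m % (N:ℤ)).toNat) (fun n => (hL n).choose) ?_ ?_ ?_ ?_ ?_
    · intro m hm
      refine Finset.mem_range.2 ?_
      show (m % (N:ℤ)).toNat < N
      have h1 : 0 ≤ m % (N:ℤ) := Int.emod_nonneg m hNZ
      have h2 : m % (N:ℤ) < N := Int.emod_lt_of_pos m (by exact_mod_cast hN)
      have h3 : ((m % (N:ℤ)).toNat : ℤ) = m % (N:ℤ) := Int.toNat_of_nonneg h1
      omega
    · intro n hn
      exact ((hL n).choose_spec).1.1
    · intro m hm
      have hspec := ((hL ((m % (N:ℤ)).toNat : ℤ)).choose_spec).1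
      refine icr_injOn hL hspec.1 hm ?_
      have h1 : 0 ≤ m % (N:ℤ) := Int.emod_nonneg m hNZ
      have h2 : (((m % (N:ℤ)).toNat : ℤ)) = m % (N:ℤ) := Int.toNat_of_nonneg h1
      calc (hL ((m % (N:ℤ)).toNat : ℤ)).choose ≡ ((m % (N:ℤ)).toNat : ℤ) [ZMOD (N:ℤ)] := hspec.2
        _ ≡ m [ZMOD (N:ℤ)] := by rw [h2]; exact Int.emod_emod_of_dvd m dvd_rfl ▸ Int.mod_modEq m (N:ℤ)
    · intro n hn
      show ((hL (n:ℤ)).choose % (N:ℤ)).toNat = n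
      have hspec := ((hL (n : ℤ)).choose_spec).1
      have heq : (hL (n:ℤ)).choose % (N:ℤ) = (n : ℤ) % (N:ℤ) := hspec.2
      rw [heq, Int.emod_eq_of_lt (by positivity) (by exact_mod_cast Finset.mem_range.1 hn)]
      exact Int.toNat_natCast n
    · intro m hm
      have h1 : 0 ≤ m % (N:ℤ) := Int.emod_nonneg m hNZ
      have h2 : (((m % (N:ℤ)).toNat : ℤ)) = m % (N:ℤ) := Int.toNat_of_nonneg h1
      have hmod : c * m ≡ c * (((m % (N:ℤ)).toNat : ℤ)) [ZMOD (N:ℤ)] := by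
        rw [h2]
        exact Int.ModEq.mul_left c (Int.mod_modEq m (N:ℤ)).symm
      have := exp_residue hN hmod
      simpa using this
  rw [hstep]
  have hexp : ∀ n : ℕ, Complex.exp (2 * Real.pi * Complex.I * (((c * n : ℤ) : ℂ) / N)) =
      (Complex.exp (2 * Real.pi * Complex.I * ((c : ℂ) / N))) ^ n := by
    intro n
    rw [← Complex.exp_nat_mul]
    congr 1
    push_cast
    ring
  simp_rw [hexp]
  by_cases hdvd : (N : ℤ) ∣ c
  · have hx : Complex.exp (2 * Real.pi * Complex.I * ((c : ℂ) / N)) = 1 := by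
      obtain ⟨k, hk⟩ := hdvd
      have heq : 2 * (Real.pi:ℂ) * Complex.I * ((c : ℂ) / N) = k * (2 * Real.pi * Complex.I) := by
        rw [hk]; push_cast; field_simp
      rw [heq, Complex.exp_int_mul_two_pi_mul_I]
    rw [hx, if_pos hdvd]
    simp
  · have h2pi : (2 * (Real.pi:ℂ) * Complex.I) ≠ 0 := by
      simp [Real.pi_ne_zero, Complex.I_ne_zero]
    have hx : Complex.exp (2 * Real.pi * Complex.I * ((c : ℂ) / N)) ≠ 1 := by
      intro h
      obtain ⟨n, hn⟩ := Complex.exp_eq_one_iff.1 h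
      have hc : (c : ℂ) = ((n * N : ℤ) : ℂ) := by
        apply mul_left_cancel₀ h2pi
        push_cast
        field_simp at hn
        linear_combination (2 * (Real.pi:ℂ) * Complex.I) * hn
      have : c = n * N := by exact_mod_cast hc
      exact hdvd ⟨n, by rw [this, mul_comm]⟩
    rw [geom_sum_eq hx, if_neg hdvd]
    have hxN : (Complex.exp (2 * Real.pi * Complex.I * ((c : ℂ) / N))) ^ N = 1 := by
      rw [← Complex.exp_nat_mul]
      have heq : (N:ℂ) * (2 * Real.pi * Complex.I * ((c : ℂ) / N)) = c * (2 * Real.pi * Complex.I) := by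
        field_simp
      rw [heq, Complex.exp_int_mul_two_pi_mul_I]
    rw [hxN, sub_self, zero_div]

lemma term_mul_conj (s : ℝ) (x y : ℤ) (l l' : ℝ) :
    ((s:ℂ) * Complex.exp (2 * Real.pi * Complex.I * ((x:ℤ):ℂ) * ((l:ℝ):ℂ))) *
      (starRingEnd ℂ) ((s:ℂ) * Complex.exp (2 * Real.pi * Complex.I * ((y:ℤ):ℂ) * ((l':ℝ):ℂ)))
    = ((s^2 : ℝ):ℂ) * Complex.exp (2 * Real.pi * Complex.I * ((x:ℂ) * (l:ℂ) - (y:ℂ) * (l':ℂ))) := by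
  rw [_root_.map_mul, ← Complex.exp_conj]
  have hc : (starRingEnd ℂ) (2 * Real.pi * Complex.I * ((y:ℤ):ℂ) * ((l':ℝ):ℂ))
      = -(2 * Real.pi * Complex.I * ((y:ℤ):ℂ) * ((l':ℝ):ℂ)) := by
    simp only [_root_.map_mul, Complex.conj_I, map_ofNat, Complex.conj_ofReal, map_intCast]
    ring
  rw [hc, Complex.conj_ofReal, mul_mul_mul_comm, ← Complex.exp_add]
  push_cast
  ring_nf

lemma converse_spectrum (N : ℕ) (hN : 0 < N) (d f R S : ℤ) (B₀ L₀ : Finset ℤ)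
    (hB₀ : IsCompleteResidues (N:ℤ) B₀) (hL₀ : IsCompleteResidues (N:ℤ) L₀)
    (hR : R = (N:ℤ) * S) (hS : S ∣ d * f) (hcop : Int.gcd (d * f / S) (N:ℤ) = 1) :
    IsSpectrum (B₀.image (fun b => d * b))
      (L₀.image (fun m => ((f * m : ℤ) : ℝ) / (R : ℝ))) := by
  classical
  set e : ℤ := d * f / S with he
  have hSe : d * f = S * e := by
    rw [he, mul_comm S]
    exact (Int.ediv_mul_cancel hS).symm
  set φ : ℤ → ℝ := fun m => ((f * m : ℤ) : ℝ) / (R : ℝ) with hφ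
  set B' := B₀.image (fun b => d * b) with hB'
  set Λ' := L₀.image φ with hΛ'
  have hcB₀ : B₀.card = N := icr_card hN hB₀
  have hcL₀ : L₀.card = N := icr_card hN hL₀
  -- nonzero facts when N ≥ 2
  have hnz : 2 ≤ N → S ≠ 0 ∧ d ≠ 0 ∧ f ≠ 0 ∧ R ≠ 0 := by
    intro hN2
    have he0 : e ≠ 0 := by
      intro h
      rw [h] at hcop
      simp [Int.gcd] at hcop
      omega
    have hS0 : S ≠ 0 := by
      intro h
      rw [h] at hS
      have hdf0 : d * f = 0 := zero_dvd_iff.1 hS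
      exact he0 (by rw [he, hdf0, Int.zero_ediv])
    have hdf : d * f ≠ 0 := by rw [hSe]; exact mul_ne_zero hS0 he0
    refine ⟨hS0, fun h => hdf (by rw [h, zero_mul]), fun h => hdf (by rw [h, mul_zero]), ?_⟩
    rw [hR]
    exact mul_ne_zero (by exact_mod_cast hN.ne') hS0
  have hcB' : B'.card = N := by
    by_cases h1 : N = 1
    · subst h1
      refine le_antisymm (le_trans Finset.card_image_le (le_of_eq hcB₀)) ?_
      have : B₀.Nonempty := Finset.card_pos.1 (by omega)
      exact Finset.card_pos.2 (this.image _)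
    · obtain ⟨-, hd0, -, -⟩ := hnz (by omega)
      rw [hB', Finset.card_image_of_injective _ (mul_right_injective₀ hd0), hcB₀]
  have hφinj : 2 ≤ N → Set.InjOn φ L₀ := by
    intro hN2 m hm m' hm' hmm
    obtain ⟨-, -, hf0, hR0⟩ := hnz hN2
    have hRr : (R:ℝ) ≠ 0 := by exact_mod_cast hR0
    have h2 : ((f * m : ℤ) : ℝ) = ((f * m' : ℤ) : ℝ) := by
      have h3 := congrArg (fun t : ℝ => t * (R:ℝ)) hmm
      simpa [hφ, div_mul_cancel₀, hRr] using h3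
    have h4 : f * m = f * m' := by exact_mod_cast h2
    exact mul_left_cancel₀ hf0 h4
  have hcΛ' : Λ'.card = N := by
    by_cases h1 : N = 1
    · subst h1
      refine le_antisymm (le_trans Finset.card_image_le (le_of_eq hcL₀)) ?_
      have : L₀.Nonempty := Finset.card_pos.1 (by omega)
      exact Finset.card_pos.2 (this.image _)
    · rw [hΛ', Finset.card_image_of_injOn (hφinj (by omega)), hcL₀]
  set s : ℝ := 1 / Real.sqrt N with hs
  have hMentry : ∀ (b : ↥B') (l : ↥Λ'), specMatrix B' Λ' b l =
      (s:ℂ) * Complex.exp (2 * Real.pi * Complex.I * ((b:ℤ):ℂ) * ((l:ℝ):ℂ)) := by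
    intro b l
    rw [specMatrix, hcB']
  have hs2 : ((s^2 : ℝ):ℂ) = 1 / (N:ℂ) := by
    have : (s^2 : ℝ) = 1 / N := by
      rw [hs, div_pow, one_pow, Real.sq_sqrt (Nat.cast_nonneg N)]
    rw [this]
    push_cast
    ring
  have hNC : (N:ℂ) ≠ 0 := Nat.cast_ne_zero.2 hN.ne'
  -- key exponent identity
  have hexp : 2 ≤ N → ∀ (x y : ℤ), x ∈ B₀ → y ∈ L₀ →
      ((d * x : ℤ):ℂ) * ((φ y : ℝ):ℂ) = ((e * x * y : ℤ):ℂ) / (N:ℂ) := by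
    intro hN2 x y hx hy
    obtain ⟨hS0, -, -, hR0⟩ := hnz hN2
    have hRC : ((R:ℤ):ℂ) ≠ 0 := by exact_mod_cast hR0
    have hSC : ((S:ℤ):ℂ) ≠ 0 := by exact_mod_cast hS0
    have h1 : ((φ y : ℝ):ℂ) = ((f * y : ℤ):ℂ) / ((R:ℤ):ℂ) := by
      rw [hφ]
      push_cast
      ring
    rw [h1, mul_div_assoc', div_eq_div_iff hRC hNC]
    have hint : (d * x) * (f * y) * (N:ℤ) = (e * x * y) * R := by
      rw [hR]
      linear_combination x * y * (N:ℤ) * hSe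
    exact_mod_cast congrArg (fun z : ℤ => (z : ℂ)) hint
  refine ⟨by rw [hcB', hcΛ'], ?_, ?_⟩
  · ext b b'
    rw [Matrix.mul_apply, Matrix.one_apply]
    have hsum : ∀ k : ↥Λ', specMatrix B' Λ' b k * (specMatrix B' Λ')ᴴ k b' =
        ((s^2:ℝ):ℂ) * Complex.exp (2 * Real.pi * Complex.I *
          (((b:ℤ):ℂ) * ((k:ℝ):ℂ) - ((b':ℤ):ℂ) * ((k:ℝ):ℂ))) := by
      intro k
      rw [Matrix.conjTranspose_apply, hMentry, hMentry]
      exact term_mul_conj s (b:ℤ) (b':ℤ) (k:ℝ) (k:ℝ)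
    rw [Finset.sum_congr rfl (fun k _ => hsum k)]
    by_cases hbb : b = b'
    · subst hbb
      rw [if_pos rfl]
      have : ∀ k : ↥Λ', ((s^2:ℝ):ℂ) * Complex.exp (2 * Real.pi * Complex.I *
          (((b:ℤ):ℂ) * ((k:ℝ):ℂ) - ((b:ℤ):ℂ) * ((k:ℝ):ℂ))) = ((s^2:ℝ):ℂ) := by
        intro k
        rw [sub_self, mul_zero, Complex.exp_zero, mul_one]
      rw [Finset.sum_congr rfl (fun k _ => this k), Finset.sum_const, Finset.card_univ,
        Fintype.card_coe, hcΛ', hs2]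
      field_simp
      rw [nsmul_eq_mul, mul_one_div_cancel hNC]
    · rw [if_neg hbb]
      -- N ≥ 2
      have hN2 : 2 ≤ N := by
        by_contra h
        have h1 : N = 1 := by omega
        have := Finset.card_le_one.1 (le_of_eq (hcB'.trans h1)) (b:ℤ) b.2 (b':ℤ) b'.2
        exact hbb (Subtype.ext this)
      obtain ⟨x, hxmem, hxeq⟩ := Finset.mem_image.1 b.2
      obtain ⟨x', hxmem', hxeq'⟩ := Finset.mem_image.1 b'.2
      -- rewrite sum over Λ' as sum over L₀
      have h1 : ∑ k : ↥Λ', ((s^2:ℝ):ℂ) * Complex.exp (2 * Real.pi * Complex.I *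
            (((b:ℤ):ℂ) * ((k:ℝ):ℂ) - ((b':ℤ):ℂ) * ((k:ℝ):ℂ)))
          = ∑ m ∈ L₀, ((s^2:ℝ):ℂ) * Complex.exp (2 * Real.pi * Complex.I *
            ((((e * (x - x') * m : ℤ)):ℂ) / (N:ℂ))) := by
        rw [Finset.sum_coe_sort Λ' (fun l : ℝ => ((s^2:ℝ):ℂ) * Complex.exp (2 * Real.pi * Complex.I *
            (((b:ℤ):ℂ) * ((l:ℝ):ℂ) - ((b':ℤ):ℂ) * ((l:ℝ):ℂ))))]
        rw [hΛ', Finset.sum_image (fun a ha a' ha' h => hφinj hN2 ha ha' h)]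
        refine Finset.sum_congr rfl fun m hm => ?_
        congr 1
        have e1 := hexp hN2 x m hxmem hm
        have e2 := hexp hN2 x' m hxmem' hm
        rw [← hxeq, ← hxeq', e1, e2]
        push_cast
        field_simp
      rw [h1, ← Finset.mul_sum, sum_exp_residues N hN hL₀ (e * (x - x'))]
      rw [if_neg, mul_zero]
      -- N does not divide e * (x - x')
      intro hdvd
      have hcop' : IsCoprime (N:ℤ) e := by
        rw [Int.isCoprime_iff_gcd_eq_one, Int.gcd_comm]
        exact hcop
      have : (N:ℤ) ∣ (x - x') := hcop'.dvd_of_dvd_mul_left (by rwa [mul_comm e (x - x'), mul_comm] at hdvd)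
      have hxx : x = x' := icr_injOn hB₀ hxmem hxmem' (Int.ModEq.symm ((Int.modEq_iff_dvd).2 (by omega)))
      exact hbb (Subtype.ext (by rw [← hxeq, ← hxeq', hxx]))
  · ext l l'
    rw [Matrix.mul_apply, Matrix.one_apply]
    have hsum : ∀ k : ↥B', (specMatrix B' Λ')ᴴ l k * specMatrix B' Λ' k l' =
        ((s^2:ℝ):ℂ) * Complex.exp (2 * Real.pi * Complex.I *
          (((k:ℤ):ℂ) * ((l':ℝ):ℂ) - ((k:ℤ):ℂ) * ((l:ℝ):ℂ))) := by
      intro k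
      rw [Matrix.conjTranspose_apply, hMentry, hMentry, mul_comm]
      exact term_mul_conj s (k:ℤ) (k:ℤ) (l':ℝ) (l:ℝ)
    rw [Finset.sum_congr rfl (fun k _ => hsum k)]
    by_cases hll : l = l'
    · subst hll
      rw [if_pos rfl]
      have : ∀ k : ↥B', ((s^2:ℝ):ℂ) * Complex.exp (2 * Real.pi * Complex.I *
          (((k:ℤ):ℂ) * ((l:ℝ):ℂ) - ((k:ℤ):ℂ) * ((l:ℝ):ℂ))) = ((s^2:ℝ):ℂ) := by
        intro k
        rw [sub_self, mul_zero, Complex.exp_zero, mul_one]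
      rw [Finset.sum_congr rfl (fun k _ => this k), Finset.sum_const, Finset.card_univ,
        Fintype.card_coe, hcB', hs2]
      field_simp
      rw [nsmul_eq_mul, mul_one_div_cancel hNC]
    · rw [if_neg hll]
      have hN2 : 2 ≤ N := by
        by_contra h
        have h1 : N = 1 := by omega
        have := Finset.card_le_one.1 (le_of_eq (hcΛ'.trans h1)) (l:ℝ) l.2 (l':ℝ) l'.2
        exact hll (Subtype.ext this)
      obtain ⟨m, hmmem, hmeq⟩ := Finset.mem_image.1 l.2
      obtain ⟨m', hmmem', hmeq'⟩ := Finset.mem_image.1 l'.2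
      have hd0 := (hnz hN2).2.1
      have h1 : ∑ k : ↥B', ((s^2:ℝ):ℂ) * Complex.exp (2 * Real.pi * Complex.I *
            (((k:ℤ):ℂ) * ((l':ℝ):ℂ) - ((k:ℤ):ℂ) * ((l:ℝ):ℂ)))
          = ∑ x ∈ B₀, ((s^2:ℝ):ℂ) * Complex.exp (2 * Real.pi * Complex.I *
            ((((e * (m' - m) * x : ℤ)):ℂ) / (N:ℂ))) := by
        rw [Finset.sum_coe_sort B' (fun z : ℤ => ((s^2:ℝ):ℂ) * Complex.exp (2 * Real.pi * Complex.I *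
            (((z:ℤ):ℂ) * ((l':ℝ):ℂ) - ((z:ℤ):ℂ) * ((l:ℝ):ℂ))))]
        rw [hB', Finset.sum_image (fun a ha a' ha' h => mul_left_cancel₀ hd0 h)]
        refine Finset.sum_congr rfl fun x hx => ?_
        congr 1
        have e1 := hexp hN2 x m' hx hmmem'
        have e2 := hexp hN2 x m hx hmmem
        rw [← hmeq, ← hmeq', e1, e2]
        push_cast
        field_simp
      rw [h1, ← Finset.mul_sum, sum_exp_residues N hN hB₀ (e * (m' - m))]
      rw [if_neg, mul_zero]
      intro hdvd
      have hcop' : IsCoprime (N:ℤ) e := by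
        rw [Int.isCoprime_iff_gcd_eq_one, Int.gcd_comm]
        exact hcop
      have : (N:ℤ) ∣ (m' - m) := hcop'.dvd_of_dvd_mul_left (by rwa [mul_comm e (m' - m), mul_comm] at hdvd)
      have hmm : m' = m := icr_injOn hL₀ hmmem' hmmem (Int.ModEq.symm ((Int.modEq_iff_dvd).2 (by omega)))
      exact hll (Subtype.ext (by rw [← hmeq, ← hmeq', hmm]))

theorem forward_dir (N : ℕ) (hN : 0 < N) (B : Finset ℤ)
    (Λ : Finset ℝ) (hcardB : B.card = N) (hcardΛ : Λ.card = N) (h0B : (0 : ℤ) ∈ B)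
    (h0Λ : (0 : ℝ) ∈ Λ)
    (hequiv : EquivToStd (specMatrix B Λ) (stdHadamard N)) :
    (∃ (d : ℤ) (B₀ : Finset ℤ), IsCompleteResidues (N : ℤ) B₀ ∧ B₀.gcd id = 1 ∧
      B = B₀.image (fun b => d * b) ∧
      ∃ (f R S : ℤ) (L₀ : Finset ℤ), IsCompleteResidues (N : ℤ) L₀ ∧ L₀.gcd id = 1 ∧
        Λ = L₀.image (fun m => ((f * m : ℤ) : ℝ) / (R : ℝ)) ∧
        R = (N : ℤ) * S ∧ S ∣ d * f ∧ Int.gcd (d * f / S) (N : ℤ) = 1) := by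
  classical
  -- Degenerate case N = 1
  by_cases hN1 : N = 1
  · subst hN1
    obtain ⟨bb, hbb⟩ := Finset.card_eq_one.1 hcardB
    obtain ⟨ll, hll⟩ := Finset.card_eq_one.1 hcardΛ
    have hB0 : B = {0} := by
      rw [hbb] at h0B ⊢
      rw [Finset.mem_singleton.1 h0B]
    have hΛ0 : Λ = {0} := by
      rw [hll] at h0Λ ⊢
      rw [Finset.mem_singleton.1 h0Λ]
    have hicr : IsCompleteResidues ((1:ℕ):ℤ) ({1} : Finset ℤ) := by
      intro x
      exact ⟨1, ⟨Finset.mem_singleton_self 1, Int.modEq_one⟩,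
        fun y hy => Finset.mem_singleton.1 hy.1⟩
    refine ⟨0, {1}, hicr, by simp, by simp [hB0], 0, 1, 1, {1}, hicr, by simp, by simp [hΛ0],
      by norm_num, ⟨0, by ring⟩, by norm_num⟩
  have hN2 : 2 ≤ N := by omega
  obtain ⟨σ, τ, c, dd, hc, hd, hH⟩ := hequiv
  set b0 : ↥B := ⟨0, h0B⟩ with hb0def
  set l0 : ↥Λ := ⟨0, h0Λ⟩ with hl0def
  set J : ↥B → ℤ := fun b => ((σ b : ℕ) : ℤ) - ((σ b0 : ℕ) : ℤ) with hJdef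
  set K : ↥Λ → ℤ := fun l => ((τ l : ℕ) : ℤ) - ((τ l0 : ℕ) : ℤ) with hKdef
  have hNC : (N : ℂ) ≠ 0 := Nat.cast_ne_zero.2 hN.ne'
  have h2pi : (2 * (Real.pi:ℂ) * Complex.I) ≠ 0 := by
    simp [Real.pi_ne_zero, Complex.I_ne_zero]
  have hs0 : ((1 / Real.sqrt N : ℝ) : ℂ) ≠ 0 := by
    have : Real.sqrt N > 0 := Real.sqrt_pos.2 (by exact_mod_cast hN)
    simp [this.ne']
  -- entry relation without the 1/sqrt N factor
  set E : ↥B → ↥Λ → ℂ := fun b l =>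
    Complex.exp (2 * (Real.pi:ℂ) * Complex.I * ((b:ℤ):ℂ) * ((l:ℝ):ℂ)) with hEdef
  set G : Fin N → Fin N → ℂ := fun j k =>
    Complex.exp (2 * (Real.pi:ℂ) * Complex.I * ((j:ℕ):ℂ) * ((k:ℕ):ℂ) / (N:ℂ)) with hGdef
  have hE : ∀ (b : ↥B) (l : ↥Λ), E b l = c b * dd l * G (σ b) (τ l) := by
    intro b l
    have h := hH b l
    simp only [specMatrix, stdHadamard, hcardB] at h
    apply mul_left_cancel₀ hs0
    rw [h]; ring
  -- the key divisibility relation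
  have hkey : ∀ (b : ↥B) (l : ↥Λ), ∃ n : ℤ,
      (N:ℝ) * ((b:ℤ):ℝ) * ((l:ℝ)) = ((J b * K l + N * n : ℤ) : ℝ) := by
    intro b l
    have h1 := hE b l
    have h2 := hE b l0
    have h3 := hE b0 l
    have h4 := hE b0 l0
    have hb00 : ((b0:ℤ):ℂ) = 0 := by rw [hb0def]; simp
    have hl00 : ((l0:ℝ):ℂ) = 0 := by rw [hl0def]; simp
    have hE2 : E b l0 = 1 := by rw [hEdef]; simp [hl00]
    have hE3 : E b0 l = 1 := by rw [hEdef]; simp [hb00]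
    have hE4 : E b0 l0 = 1 := by rw [hEdef]; simp [hb00]
    rw [hE2] at h2; rw [hE3] at h3; rw [hE4] at h4
    have hcb : c b ≠ 0 := fun h => by simpa [h] using hc b
    have hcb0 : c b0 ≠ 0 := fun h => by simpa [h] using hc b0
    have hdl : dd l ≠ 0 := fun h => by simpa [h] using hd l
    have hdl0 : dd l0 ≠ 0 := fun h => by simpa [h] using hd l0
    have hCne : c b * c b0 * dd l * dd l0 ≠ 0 := by
      exact mul_ne_zero (mul_ne_zero (mul_ne_zero hcb hcb0) hdl) hdl0
    have hmain : G (σ b) (τ l) * G (σ b0) (τ l0) = E b l * G (σ b) (τ l0) * G (σ b0) (τ l) := by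
      apply mul_right_cancel₀ hCne
      calc G (σ b) (τ l) * G (σ b0) (τ l0) * (c b * c b0 * dd l * dd l0)
          = (c b * dd l * G (σ b) (τ l)) * (c b0 * dd l0 * G (σ b0) (τ l0)) := by ring
        _ = E b l * 1 := by rw [← h1, ← h4]
        _ = E b l * ((c b * dd l0 * G (σ b) (τ l0)) * (c b0 * dd l * G (σ b0) (τ l))) := by
            rw [← h2, ← h3]; ring
        _ = E b l * G (σ b) (τ l0) * G (σ b0) (τ l) * (c b * c b0 * dd l * dd l0) := by ring
    -- translate into exponentials
    rw [hGdef, hEdef] at hmain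
    simp only at hmain
    rw [← Complex.exp_add, ← Complex.exp_add, ← Complex.exp_add] at hmain
    obtain ⟨n, hn⟩ := Complex.exp_eq_exp_iff_exists_int.1 hmain
    refine ⟨-n, ?_⟩
    have hceq : 2 * (Real.pi:ℂ) * Complex.I * ((N:ℝ) * ((b:ℤ):ℝ) * ((l:ℝ)) : ℝ)
        = 2 * (Real.pi:ℂ) * Complex.I * (((J b * K l + N * (-n) : ℤ) : ℝ) : ℂ) := by
      field_simp at hn
      push_cast [hJdef, hKdef]
      push_cast at hn
      linear_combination -(2 * (Real.pi:ℂ) * Complex.I) * hn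
    have := mul_left_cancel₀ h2pi hceq
    exact_mod_cast this
  -- integer-valued N*b*λ
  set ν : ↥B → ↥Λ → ℤ := fun b l => J b * K l + N * (hkey b l).choose with hνdef
  have hν : ∀ (b : ↥B) (l : ↥Λ), (N:ℝ) * ((b:ℤ):ℝ) * ((l:ℝ)) = ((ν b l : ℤ) : ℝ) :=
    fun b l => (hkey b l).choose_spec
  have hνmod : ∀ (b : ↥B) (l : ↥Λ), ν b l ≡ J b * K l [ZMOD (N:ℤ)] := by
    intro b l
    show (J b * K l + (N:ℤ) * (hkey b l).choose) % (N:ℤ) = (J b * K l) % (N:ℤ)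
    exact Int.add_mul_emod_self_left _ _ _
  -- injectivity and surjectivity of J and K mod N
  have hfin_eq : ∀ (x y : Fin N), ((x:ℕ):ℤ) ≡ ((y:ℕ):ℤ) [ZMOD (N:ℤ)] → x = y := by
    intro x y hxy
    have h1 : ((x:ℕ):ℤ) % (N:ℤ) = ((x:ℕ):ℤ) :=
      Int.emod_eq_of_lt (by positivity) (by exact_mod_cast x.2)
    have h2 : ((y:ℕ):ℤ) % (N:ℤ) = ((y:ℕ):ℤ) :=
      Int.emod_eq_of_lt (by positivity) (by exact_mod_cast y.2)
    have : ((x:ℕ):ℤ) = ((y:ℕ):ℤ) := by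
      have := hxy
      rwa [Int.ModEq, h1, h2] at this
    exact Fin.ext (by exact_mod_cast this)
  have hJinj : ∀ (b b' : ↥B), J b ≡ J b' [ZMOD (N:ℤ)] → b = b' := by
    intro b b' h
    have : ((σ b : ℕ):ℤ) ≡ ((σ b' : ℕ):ℤ) [ZMOD (N:ℤ)] := by
      have := Int.ModEq.add_right ((σ b0 : ℕ):ℤ) h
      simpa [hJdef] using this
    exact σ.injective (hfin_eq _ _ this)
  have hKinj : ∀ (l l' : ↥Λ), K l ≡ K l' [ZMOD (N:ℤ)] → l = l' := by
    intro l l' h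
    have : ((τ l : ℕ):ℤ) ≡ ((τ l' : ℕ):ℤ) [ZMOD (N:ℤ)] := by
      have := Int.ModEq.add_right ((τ l0 : ℕ):ℤ) h
      simpa [hKdef] using this
    exact τ.injective (hfin_eq _ _ this)
  have hJsurj : ∀ t : ℤ, ∃ b : ↥B, J b ≡ t [ZMOD (N:ℤ)] := by
    intro t
    set x : ℤ := (t + ((σ b0 : ℕ):ℤ)) % (N:ℤ) with hx
    have hx0 : 0 ≤ x := Int.emod_nonneg _ (by exact_mod_cast hN.ne')
    have hxN : x < N := Int.emod_lt_of_pos _ (by exact_mod_cast hN)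
    refine ⟨σ.symm ⟨x.toNat, by omega⟩, ?_⟩
    have hσ : ((σ (σ.symm ⟨x.toNat, by omega⟩) : ℕ):ℤ) = x := by
      rw [Equiv.apply_symm_apply]
      simp only [Fin.val_mk]
      exact Int.toNat_of_nonneg hx0
    show J _ ≡ t [ZMOD (N:ℤ)]
    rw [hJdef]
    simp only
    rw [hσ]
    have h1 : x ≡ t + ((σ b0 : ℕ):ℤ) [ZMOD (N:ℤ)] := Int.mod_modEq _ _
    have := Int.ModEq.sub_right ((σ b0 : ℕ):ℤ) h1
    simpa using this
  have hKsurj : ∀ t : ℤ, ∃ l : ↥Λ, K l ≡ t [ZMOD (N:ℤ)] := by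
    intro t
    set x : ℤ := (t + ((τ l0 : ℕ):ℤ)) % (N:ℤ) with hx
    have hx0 : 0 ≤ x := Int.emod_nonneg _ (by exact_mod_cast hN.ne')
    have hxN : x < N := Int.emod_lt_of_pos _ (by exact_mod_cast hN)
    refine ⟨τ.symm ⟨x.toNat, by omega⟩, ?_⟩
    have hτ : ((τ (τ.symm ⟨x.toNat, by omega⟩) : ℕ):ℤ) = x := by
      rw [Equiv.apply_symm_apply]
      simp only [Fin.val_mk]
      exact Int.toNat_of_nonneg hx0
    show K _ ≡ t [ZMOD (N:ℤ)]
    rw [hKdef]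
    simp only
    rw [hτ]
    have h1 : x ≡ t + ((τ l0 : ℕ):ℤ) [ZMOD (N:ℤ)] := Int.mod_modEq _ _
    have := Int.ModEq.sub_right ((τ l0 : ℕ):ℤ) h1
    simpa using this

  -- choose b₁ with J b₁ ≡ 1 and l₁ with K l₁ ≡ 1
  obtain ⟨b₁, hb₁⟩ := hJsurj 1
  obtain ⟨l₁, hl₁⟩ := hKsurj 1
  have hNnd1 : ¬ ((N:ℤ) ∣ 1) := by
    intro h
    have := Int.le_of_dvd one_pos h
    omega
  have hz₁ : (b₁:ℤ) ≠ 0 := by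
    intro h
    have hbb : b₁ = b0 := Subtype.ext h
    rw [hbb] at hb₁
    have hJ0 : J b0 = 0 := by simp [hJdef]
    rw [hJ0] at hb₁
    exact hNnd1 (by simpa using hb₁.dvd)
  set z₁ : ℤ := (b₁ : ℤ) with hz₁def
  set u : ↥Λ → ℤ := fun l => ν b₁ l with hudef
  have hu : ∀ l : ↥Λ, (N:ℝ) * (z₁:ℝ) * (l:ℝ) = ((u l : ℤ) : ℝ) := fun l => hν b₁ l
  have humod : ∀ l, u l ≡ K l [ZMOD (N:ℤ)] :=
    fun l => (hνmod b₁ l).trans ((hb₁.mul_right (K l)).trans (by rw [one_mul]))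
  have hNz₁ : ((N:ℝ) * (z₁:ℝ)) ≠ 0 := by
    apply mul_ne_zero
    · exact_mod_cast hN.ne'
    · exact_mod_cast hz₁
  have huinj : ∀ l l' : ↥Λ, u l = u l' → l = l' := by
    intro l l' h
    have h1 : (N:ℝ) * (z₁:ℝ) * (l:ℝ) = (N:ℝ) * (z₁:ℝ) * (l':ℝ) := by
      rw [hu l, hu l', h]
    have h2 : (l:ℝ) = (l':ℝ) := mul_left_cancel₀ hNz₁ h1
    exact Subtype.ext h2
  set u₁ : ℤ := u l₁ with hu₁def
  have hu₁1 : u₁ ≡ 1 [ZMOD (N:ℤ)] := (humod l₁).trans hl₁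
  have hu₁0 : u₁ ≠ 0 := by
    intro h
    rw [h] at hu₁1
    exact hNnd1 (by simpa using hu₁1.dvd)
  -- fundamental relation
  have hrel : ∀ (b : ↥B) (l : ↥Λ), ν b l * z₁ = (b:ℤ) * u l := by
    intro b l
    have h1 := hν b l
    have h2 := hu l
    have : ((ν b l * z₁ : ℤ) : ℝ) = (((b:ℤ) * u l : ℤ) : ℝ) := by
      push_cast
      push_cast at h1 h2
      linear_combination (-(z₁:ℝ)) * h1 + ((b:ℤ):ℝ) * h2
    exact_mod_cast this
  have hz₁dvd : ∀ (b : ↥B) (l : ↥Λ), z₁ ∣ (b:ℤ) * u l :=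
    fun b l => ⟨ν b l, by rw [← hrel b l]; ring⟩
  -- the gcds
  set d : ℤ := B.gcd id with hddef
  have hddvd : ∀ b ∈ B, d ∣ b := fun b hb => Finset.gcd_dvd hb
  have hd0 : d ≠ 0 := by
    intro h
    exact hz₁ (Finset.gcd_eq_zero_iff.1 h z₁ b₁.2)
  set f : ℤ := Finset.univ.gcd u with hfdef
  have hfdvd : ∀ l : ↥Λ, f ∣ u l := fun l => Finset.gcd_dvd (Finset.mem_univ l)
  have hf0 : f ≠ 0 := by
    intro h
    exact hu₁0 (Finset.gcd_eq_zero_iff.1 h l₁ (Finset.mem_univ l₁))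
  -- b' divides everything in B
  have htpos : 0 < Int.gcd z₁ u₁ := Int.gcd_pos_of_ne_zero_left u₁ hz₁
  set t : ℤ := (Int.gcd z₁ u₁ : ℤ) with htdef
  have ht0 : t ≠ 0 := by simpa [htdef] using (Int.natCast_ne_zero.mpr htpos.ne')
  set b' : ℤ := z₁ / t with hb'def
  set u' : ℤ := u₁ / t with hu'def
  have htz : t ∣ z₁ := Int.gcd_dvd_left _ _
  have htu : t ∣ u₁ := Int.gcd_dvd_right _ _
  have hzeq : z₁ = t * b' := (Int.mul_ediv_cancel' htz).symm
  have hueq : u₁ = t * u' := (Int.mul_ediv_cancel' htu).symm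
  have hcop' : IsCoprime b' u' := Int.isCoprime_iff_gcd_eq_one.2 (Int.gcd_div_gcd_div_gcd htpos)
  have hb'0 : b' ≠ 0 := by
    intro h
    exact hz₁ (by rw [hzeq, h, mul_zero])
  have hb'b : ∀ b ∈ B, b' ∣ b := by
    intro b hb
    have h1 : z₁ ∣ b * u₁ := hz₁dvd ⟨b, hb⟩ l₁
    have h2 : t * b' ∣ t * (b * u') := by
      rw [← hzeq]
      have : t * (b * u') = b * (t * u') := by ring
      rw [this, ← hueq]
      exact h1
    have h3 : b' ∣ b * u' := (mul_dvd_mul_iff_left ht0).1 h2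
    exact hcop'.dvd_of_dvd_mul_right h3
  have hb'd : b' ∣ d := Finset.dvd_gcd (fun b hb => hb'b b hb)
  -- the v function
  set v : ↥B → ℤ := fun b => ν b l₁ with hvdef
  have hvmod : ∀ b, v b ≡ J b [ZMOD (N:ℤ)] :=
    fun b => (hνmod b l₁).trans ((hl₁.mul_left (J b)).trans (by rw [mul_one]))
  have hvrel : ∀ (b : ↥B), v b * z₁ = (b:ℤ) * u₁ := fun b => hrel b l₁
  -- B₀
  set B₀ : Finset ℤ := B.image (fun b => b / d) with hB₀def
  have hBimg : B = B₀.image (fun b => d * b) := by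
    symm
    rw [hB₀def, Finset.image_image]
    calc B.image ((fun b => d * b) ∘ (fun b => b / d))
        = B.image id := Finset.image_congr (fun x hx => Int.mul_ediv_cancel' (hddvd x hx))
      _ = B := Finset.image_id
  have hdivinj : ∀ x ∈ B, ∀ y ∈ B, x / d = y / d → x = y := by
    intro x hx y hy h
    calc x = d * (x / d) := (Int.mul_ediv_cancel' (hddvd x hx)).symm
      _ = d * (y / d) := by rw [h]
      _ = y := Int.mul_ediv_cancel' (hddvd y hy)
  have hB₀card : B₀.card = N := by
    rw [hB₀def, Finset.card_image_of_injOn (fun x hx y hy h => hdivinj x hx y hy h), hcardB]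
  have hB₀icr : IsCompleteResidues (N:ℤ) B₀ := by
    refine icr_of_card hN hB₀card ?_
    intro a ha b hb hab
    obtain ⟨x, hx, rfl⟩ := Finset.mem_image.1 ha
    obtain ⟨y, hy, rfl⟩ := Finset.mem_image.1 hb
    obtain ⟨k, hk⟩ := hab.dvd
    have hxy : y - x = d * (N:ℤ) * k := by
      calc y - x = d * (y / d) - d * (x / d) := by
            rw [Int.mul_ediv_cancel' (hddvd y hy), Int.mul_ediv_cancel' (hddvd x hx)]
        _ = d * (y / d - x / d) := by ring
        _ = d * (N:ℤ) * k := by rw [hk]; ring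
    set bx : ↥B := ⟨x, hx⟩
    set by₂ : ↥B := ⟨y, hy⟩
    obtain ⟨d₂, hd₂⟩ := hb'd
    have h5 : (v by₂ - v bx) * z₁ = (y - x) * u₁ := by
      have e1 := hvrel by₂
      have e2 := hvrel bx
      change v by₂ * z₁ = y * u₁ at e1
      change v bx * z₁ = x * u₁ at e2
      linear_combination e1 - e2
    have hvΔ : v by₂ - v bx = d₂ * (N:ℤ) * k * u' := by
      apply mul_right_cancel₀ (mul_ne_zero ht0 hb'0)
      calc (v by₂ - v bx) * (t * b') = (v by₂ - v bx) * z₁ := by rw [← hzeq]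
        _ = (y - x) * u₁ := h5
        _ = (d * (N:ℤ) * k) * u₁ := by rw [hxy]
        _ = ((b' * d₂) * (N:ℤ) * k) * (t * u') := by rw [← hd₂, ← hueq]
        _ = d₂ * (N:ℤ) * k * u' * (t * b') := by ring
    have hmodv : v bx ≡ v by₂ [ZMOD (N:ℤ)] := by
      apply Int.modEq_iff_dvd.2
      exact ⟨d₂ * k * u', by rw [hvΔ]; ring⟩
    have : bx = by₂ := hJinj bx by₂ (((hvmod bx).symm.trans hmodv).trans (hvmod by₂))
    have hxy2 : x = y := congrArg Subtype.val this
    rw [hxy2]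
  have hgcdB₀ : B₀.gcd id = 1 := by
    have h1 : B.gcd (fun j => id j / B.gcd id) = 1 := Finset.gcd_div_eq_one b₁.2 hz₁
    have h2 : B₀.gcd id = B.gcd (fun b => b / d) := (Finset.gcd_eq_gcd_image).symm
    rw [h2, hddef]
    exact h1
  -- L₀
  set L₀ : Finset ℤ := Finset.univ.image (fun l : ↥Λ => u l / f) with hL₀def
  have hfinj : ∀ l l' : ↥Λ, u l / f = u l' / f → l = l' := by
    intro l l' h
    apply huinj
    calc u l = f * (u l / f) := (Int.mul_ediv_cancel' (hfdvd l)).symm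
      _ = f * (u l' / f) := by rw [h]
      _ = u l' := Int.mul_ediv_cancel' (hfdvd l')
  have hL₀card : L₀.card = N := by
    rw [hL₀def, Finset.card_image_of_injOn (fun x _ y _ h => hfinj x y h),
      Finset.card_univ, Fintype.card_coe, hcardΛ]
  have hL₀icr : IsCompleteResidues (N:ℤ) L₀ := by
    refine icr_of_card hN hL₀card ?_
    intro a ha b hb hab
    obtain ⟨l, -, rfl⟩ := Finset.mem_image.1 ha
    obtain ⟨l', -, rfl⟩ := Finset.mem_image.1 hb
    obtain ⟨k, hk⟩ := hab.dvd
    have hul : u l' - u l = (N:ℤ) * (f * k) := by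
      calc u l' - u l = f * (u l' / f) - f * (u l / f) := by
            rw [Int.mul_ediv_cancel' (hfdvd l'), Int.mul_ediv_cancel' (hfdvd l)]
        _ = f * (u l' / f - u l / f) := by ring
        _ = (N:ℤ) * (f * k) := by rw [hk]; ring
    have hmodu : u l ≡ u l' [ZMOD (N:ℤ)] := Int.modEq_iff_dvd.2 ⟨f * k, hul⟩
    have : l = l' := hKinj l l' (((humod l).symm.trans hmodu).trans (humod l'))
    rw [this]
  have hgcdL₀ : L₀.gcd id = 1 := by
    have h1 : Finset.univ.gcd (fun l : ↥Λ => u l / Finset.univ.gcd u) = 1 :=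
      Finset.gcd_div_eq_one (Finset.mem_univ l₁) hu₁0
    have h2 : L₀.gcd id = Finset.univ.gcd (fun l : ↥Λ => u l / f) := (Finset.gcd_eq_gcd_image).symm
    rw [h2, hfdef]
    exact h1
  -- the image identity for Λ
  have hΛimg : Λ = L₀.image (fun m => ((f * m : ℤ) : ℝ) / ((((N:ℤ) * z₁ : ℤ)) : ℝ)) := by
    symm
    rw [hL₀def, Finset.image_image, Finset.univ_eq_attach]
    calc Λ.attach.image ((fun m => ((f * m : ℤ) : ℝ) / ((((N:ℤ) * z₁ : ℤ)) : ℝ)) ∘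
          (fun l : ↥Λ => u l / f))
        = Λ.attach.image Subtype.val := by
          refine Finset.image_congr ?_
          intro l hl
          show ((f * (u l / f) : ℤ) : ℝ) / ((((N:ℤ) * z₁ : ℤ)) : ℝ) = (l:ℝ)
          rw [Int.mul_ediv_cancel' (hfdvd l), ← hu l]
          push_cast
          field_simp
      _ = Λ := Finset.attach_image_val
  -- S ∣ d * f
  have hSdf : z₁ ∣ d * f := by
    have h1 : ∀ b ∈ B, z₁ ∣ b * f := by
      intro b hb
      have h2 : z₁ ∣ Finset.univ.gcd (fun l : ↥Λ => b * u l) :=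
        Finset.dvd_gcd (fun l _ => hz₁dvd ⟨b, hb⟩ l)
      rw [Finset.gcd_mul_left] at h2
      exact h2.trans (mul_dvd_mul (normalize_dvd_iff.2 dvd_rfl) dvd_rfl)
    have h3 : z₁ ∣ B.gcd (fun b => b * f) := Finset.dvd_gcd (fun b hb => h1 b hb)
    rw [Finset.gcd_mul_right] at h3
    rw [hfdef] at h3 ⊢
    rwa [Finset.normalize_gcd] at h3
  -- coprimality of e = d*f/z₁ with N
  set e : ℤ := d * f / z₁ with hedef
  have hez : z₁ * e = d * f := Int.mul_ediv_cancel' hSdf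
  have hdz : d ∣ z₁ := hddvd z₁ b₁.2
  set x₁ : ℤ := z₁ / d with hx₁def
  set m₁ : ℤ := u₁ / f with hm₁def
  have hdx : d * x₁ = z₁ := Int.mul_ediv_cancel' hdz
  have hfm : f * m₁ = u₁ := Int.mul_ediv_cancel' (hfdvd l₁)
  have hexm : e * (x₁ * m₁) = u₁ := by
    apply mul_left_cancel₀ (mul_ne_zero hz₁ (mul_ne_zero hd0 hf0))
    calc z₁ * (d * f) * (e * (x₁ * m₁)) = (z₁ * e) * (d * x₁) * (f * m₁) := by ring
      _ = (d * f) * z₁ * u₁ := by rw [hez, hdx, hfm]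
      _ = z₁ * (d * f) * u₁ := by ring
  have hgcd_eN : Int.gcd e (N:ℤ) = 1 := by
    obtain ⟨k, hk⟩ := hu₁1.dvd
    have hg1 : (Int.gcd e (N:ℤ) : ℤ) ∣ e := Int.gcd_dvd_left _ _
    have hg2 : (Int.gcd e (N:ℤ) : ℤ) ∣ (N:ℤ) := Int.gcd_dvd_right _ _
    have hdvd1 : (Int.gcd e (N:ℤ) : ℤ) ∣ u₁ := by
      rw [← hexm]
      exact hg1.mul_right _
    have hdvd2 : (Int.gcd e (N:ℤ) : ℤ) ∣ 1 - u₁ := hg2.trans ⟨k, hk⟩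
    have hone : (Int.gcd e (N:ℤ) : ℤ) ∣ 1 := by
      have := dvd_add hdvd1 hdvd2
      simpa using this
    exact_mod_cast Int.eq_one_of_dvd_one (by positivity) hone
  exact ⟨d, B₀, hB₀icr, hgcdB₀, hBimg, f, (N:ℤ) * z₁, z₁, L₀, hL₀icr, hgcdL₀, hΛimg,
    rfl, hSdf, hgcd_eN⟩

/-- A spectral set `B ⊂ ℤ` of size `N` (with `0 ∈ B`), whose spectrum `Λ`
(with `0 ∈ Λ`) has associated Hadamard matrix equivalent to the standard `N × N` one,
has the form `B = d B₀` with `B₀` a complete set of residues mod `N` with `gcd B₀ = 1`;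
and `Λ = (f/R) L₀` with `L₀` a complete set of residues mod `N` with `gcd L₀ = 1`,
`R = N S`, `S ∣ d f` and `d f / S` prime to `N`. Conversely any such data yields a spectral
pair. -/
theorem spectral_equiv_standard_classification (N : ℕ) (hN : 0 < N) (B : Finset ℤ)
    (Λ : Finset ℝ) (hcardB : B.card = N) (hcardΛ : Λ.card = N) (h0B : (0 : ℤ) ∈ B)
    (h0Λ : (0 : ℝ) ∈ Λ) (hspec : IsSpectrum B Λ)
    (hequiv : EquivToStd (specMatrix B Λ) (stdHadamard N)) :
    (∃ (d : ℤ) (B₀ : Finset ℤ), IsCompleteResidues (N : ℤ) B₀ ∧ B₀.gcd id = 1 ∧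
      B = B₀.image (fun b => d * b) ∧
      ∃ (f R S : ℤ) (L₀ : Finset ℤ), IsCompleteResidues (N : ℤ) L₀ ∧ L₀.gcd id = 1 ∧
        Λ = L₀.image (fun m => ((f * m : ℤ) : ℝ) / (R : ℝ)) ∧
        R = (N : ℤ) * S ∧ S ∣ d * f ∧ Int.gcd (d * f / S) (N : ℤ) = 1) ∧
    (∀ (d f R S : ℤ) (B₀ L₀ : Finset ℤ),
      IsCompleteResidues (N : ℤ) B₀ → B₀.gcd id = 1 →
      IsCompleteResidues (N : ℤ) L₀ → L₀.gcd id = 1 →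
      R = (N : ℤ) * S → S ∣ d * f → Int.gcd (d * f / S) (N : ℤ) = 1 →
      IsSpectrum (B₀.image (fun b => d * b))
        (L₀.image (fun m => ((f * m : ℤ) : ℝ) / (R : ℝ)))) := by
  exact ⟨forward_dir N hN B Λ hcardB hcardΛ h0B h0Λ hequiv,
    fun d f R S B₀ L₀ h1 _ h3 _ h5 h6 h7 =>
      converse_spectrum N hN d f R S B₀ L₀ h1 h3 h5 h6 h7⟩
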